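/- Let n ≤ k, and let S ⊆ T(n,k) consist of all strictly increasing strings together with all their rotations. Let α = (k−n+1)(k−n+2)···(k−1)k. Then every β ∈ S is increasable in S to a rotation of α. -/
import Mathlib


namespace UCG

abbrev Str (n k : ℕ) := Fin n → Fin k

def OneUp {n k : ℕ} (β γ : Str n k) : Prop :=
  ∃ i : Fin n, β i < γ i ∧ ∀ j : Fin n, j ≠ i → β j = γ j

def IncrTo {n k : ℕ} (S : Set (Str n k)) (β α : Str n k) : Prop :=
  β ∈ S ∧ Relation.ReflTransGen (fun x y => OneUp x y ∧ y ∈ S) β α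

def IsRotation {n k : ℕ} (β γ : Str n k) : Prop :=
  ∃ j : ℕ, ∀ i : Fin n, γ i = β ⟨(i.val + j) % n, Nat.mod_lt _ i.pos⟩

def ClosedUnderRot {n k : ℕ} (S : Set (Str n k)) : Prop :=
  ∀ β ∈ S, ∀ γ, IsRotation β γ → γ ∈ S

def shift {n k : ℕ} (c : Fin k) (β : Str n k) : Str n k :=
  fun i => if i.val = 0 then c else β ⟨i.val - 1, lt_of_le_of_lt (Nat.sub_le _ _) i.isLt⟩

def lastSym {n k : ℕ} (hn : 0 < n) (β : Str n k) : Fin k :=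
  β ⟨n - 1, Nat.sub_lt hn one_pos⟩

/-- `WinIn hn S tgt β m`: in the Warden's Game with legal positions `S`, starting
from position `β`, the prisoner can force the position `tgt` to be reached within
at most `m` moves, whatever the warden does.  A move from `β = γb` is either a
warden move to `cγ ∈ S` with `c < b`, or (if the warden passes) a prisoner move
to `cγ ∈ S` with `c ≥ b`. -/
inductive WinIn {n k : ℕ} (hn : 0 < n) (S : Set (Str n k)) (tgt : Str n k) :
    Str n k → ℕ → Prop
  | passWin (β : Str n k) (m : ℕ) (c : Fin k)
      (hc : lastSym hn β ≤ c) (hcS : shift c β ∈ S) (heq : shift c β = tgt)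
      (hW : ∀ c' : Fin k, c' < lastSym hn β → shift c' β ∈ S → shift c' β ≠ tgt →
        WinIn hn S tgt (shift c' β) m) :
      WinIn hn S tgt β (m + 1)
  | passStep (β : Str n k) (m : ℕ) (c : Fin k)
      (hc : lastSym hn β ≤ c) (hcS : shift c β ∈ S)
      (hwin : WinIn hn S tgt (shift c β) m)
      (hW : ∀ c' : Fin k, c' < lastSym hn β → shift c' β ∈ S → shift c' β ≠ tgt →
        WinIn hn S tgt (shift c' β) m) :
      WinIn hn S tgt β (m + 1)

noncomputable def remoteness {n k : ℕ} (hn : 0 < n) (S : Set (Str n k))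
    (tgt β : Str n k) : ℕ∞ :=
  sInf {e : ℕ∞ | ∃ t : ℕ, e = t ∧ WinIn hn S tgt β t}

def fshift {n k : ℕ} (b : Fin k) (β : Str n k) : Str n k :=
  fun i => if h : i.val = n - 1 then b else β ⟨i.val + 1, by have := i.isLt; omega⟩

def GreedyOk {n k : ℕ} (S : Set (Str n k)) (B : ℕ → Option (Str n k)) (m : ℕ)
    (β : Str n k) (b : Fin k) : Prop :=
  fshift b β ∈ S ∧ ∀ i : ℕ, 1 ≤ i → i ≤ m → B i ≠ some (fshift b β)

def IsGreedy {n k : ℕ} (S : Set (Str n k)) (α : Str n k)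
    (B : ℕ → Option (Str n k)) : Prop :=
  B 0 = some α ∧
  (∀ m : ℕ, B m = none → B (m + 1) = none) ∧
  ∀ m : ℕ, ∀ β : Str n k, B m = some β →
    ((1 ≤ m ∧ β = α) → B (m + 1) = none) ∧
    ((m = 0 ∨ β ≠ α) →
      ((¬ ∃ b : Fin k, GreedyOk S B m β b) → B (m + 1) = none) ∧
      (∀ b : Fin k, GreedyOk S B m β b → (∀ b' : Fin k, b' < b → ¬ GreedyOk S B m β b') →
        B (m + 1) = some (fshift b β)))

def CycSubstr {m n k : ℕ} (hn : 0 < n) (γ : Str m k) (β : Str n k) : Prop :=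
  ∃ j : ℕ, ∀ i : Fin m, β ⟨(j + i.val) % n, Nat.mod_lt _ hn⟩ = γ i

private lemma sm_add {n k : ℕ} {δ : Str n k} (hδ : StrictMono δ) :
    ∀ (d : ℕ) (i : Fin n) (h : i.val + d < n),
      (δ i).val + d ≤ (δ ⟨i.val + d, h⟩).val := by
  intro d
  induction d with
  | zero => intro i h; simp
  | succ d ih =>
    intro i h
    have h1 : i.val + d < n := by omega
    have := ih i h1
    have hlt : δ ⟨i.val + d, h1⟩ < δ ⟨i.val + (d+1), h⟩ := by
      apply hδ; exact Fin.mk_lt_mk.mpr (by omega)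
    omega

private lemma sm_bound {n k : ℕ} (hnk : n ≤ k) {δ : Str n k} (hδ : StrictMono δ)
    (i : Fin n) : (δ i).val ≤ k - n + i.val := by
  have hi := i.isLt
  have hn : 0 < n := by omega
  have h : i.val + (n - 1 - i.val) < n := by omega
  have := sm_add hδ (n - 1 - i.val) i h
  have hlast : (δ ⟨i.val + (n - 1 - i.val), h⟩).val < k := (δ _).isLt
  omega

private lemma mod_exp {n : ℕ} (hn : 0 < n) (a r : ℕ) (ha : a < n) (hr : r < n) :
    (a + r) % n = if a + r < n then a + r else a + r - n := by
  split
  · exact Nat.mod_eq_of_lt (by omega)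
  · rw [Nat.mod_eq_sub_mod (by omega)]
    exact Nat.mod_eq_of_lt (by omega)

/-- for `n ≤ k`, every member of the set of strictly increasing strings
and their rotations is increasable in that set to a rotation of
`α = (k-n+1)(k-n+2)⋯(k-1)k`. -/
theorem rotations_of_increasing {n k : ℕ} (hnk : n ≤ k) :
    ∀ β ∈ {γ : Str n k | ∃ δ : Str n k, StrictMono δ ∧ IsRotation δ γ},
      ∃ γ, IsRotation
          (fun i : Fin n => (⟨k - n + i.val, by have := i.isLt; omega⟩ : Fin k)) γ ∧
        IncrTo {γ : Str n k | ∃ δ : Str n k, StrictMono δ ∧ IsRotation δ γ} β γ := by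
  intro β hβ
  obtain ⟨δ, hδ, j, hj⟩ := hβ
  by_cases hn : 0 < n
  swap
  · exact ⟨β, ⟨0, fun i => absurd i.isLt (by omega)⟩, ⟨δ, hδ, j, hj⟩, .refl⟩
  set S : Set (Str n k) := {γ : Str n k | ∃ δ : Str n k, StrictMono δ ∧ IsRotation δ γ}
    with hS
  set αf : Str n k :=
    fun i : Fin n => (⟨k - n + i.val, by have := i.isLt; omega⟩ : Fin k) with hαf
  set D : ℕ → Str n k := fun t i => if n - t ≤ i.val then αf i else δ i with hD
  have hDmono : ∀ t, StrictMono (D t) := by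
    intro t a b hab
    have hab' : a.val < b.val := hab
    have hbv := b.isLt
    have hba := sm_bound hnk hδ a
    simp only [hD, hαf]
    split <;> split
    · exact Fin.mk_lt_mk.mpr (by omega)
    · omega
    · exact Fin.lt_def.mpr (by simp only []; omega)
    · exact hδ hab
  set R : Str n k → Str n k :=
    fun f => fun i => f ⟨(i.val + j) % n, Nat.mod_lt _ i.pos⟩ with hR
  have hmem : ∀ t, R (D t) ∈ S := fun t => ⟨D t, hDmono t, j, fun i => rfl⟩
  set Rel : Str n k → Str n k → Prop := fun x y => OneUp x y ∧ y ∈ S with hRel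
  set r : ℕ := j % n with hr
  have hrn : r < n := Nat.mod_lt _ hn
  have hmodr : ∀ a : Fin n, (a.val + j) % n = (a.val + r) % n := by
    intro a
    rw [Nat.add_mod, Nat.mod_eq_of_lt a.isLt]
  have step : ∀ t, Relation.ReflTransGen Rel (R (D t)) (R (D (t + 1))) := by
    intro t
    by_cases ht : t < n
    · set p : ℕ := n - (t + 1) with hp
      have hpn : p < n := by omega
      by_cases heq : δ ⟨p, hpn⟩ = αf ⟨p, hpn⟩
      · have : D (t + 1) = D t := by
          funext i
          simp only [hD]
          split <;> split
          · rfl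
          · have hip : i = (⟨p, hpn⟩ : Fin n) := Fin.ext (show i.val = p by omega)
            rw [hip]
            exact heq.symm
          · omega
          · rfl
        rw [this]
      · refine Relation.ReflTransGen.single ⟨?_, hmem (t + 1)⟩
        set i₀ : Fin n := ⟨if r ≤ p then p - r else p + n - r, by split <;> omega⟩ with hi₀
        have hkey : (i₀.val + j) % n = p := by
          rw [hmodr i₀, mod_exp hn i₀.val r i₀.isLt hrn]
          have hval : i₀.val = if r ≤ p then p - r else p + n - r := by rw [hi₀]
          rw [hval]
          by_cases h1 : r ≤ p
          · rw [if_pos h1]; split <;> omega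
          · rw [if_neg h1]; split <;> omega
        have hδp : (δ ⟨p, hpn⟩).val < k - n + p := by
          have hb : (δ ⟨p, hpn⟩).val ≤ k - n + p := sm_bound hnk hδ ⟨p, hpn⟩
          have hne : (δ ⟨p, hpn⟩).val ≠ k - n + p := by
            intro h
            exact heq (Fin.ext (by simp only [hαf]; exact h))
          omega
        refine ⟨i₀, ?_, ?_⟩
        · show D t _ < D (t + 1) _
          have hfin : (⟨(i₀.val + j) % n, Nat.mod_lt _ i₀.pos⟩ : Fin n) = ⟨p, hpn⟩ :=
            Fin.ext hkey
          rw [hfin]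
          simp only [hD, hαf]
          rw [if_neg (by omega), if_pos (by omega)]
          exact Fin.lt_def.mpr (by simp only []; omega)
        · intro j' hj'
          show D t _ = D (t + 1) _
          set q : ℕ := (j'.val + j) % n with hq
          have hq2 : q = (j'.val + r) % n := hmodr j'
          have hqp : q ≠ p := by
            intro h
            apply hj'
            apply Fin.ext
            have e1 : (j'.val + r) % n = if j'.val + r < n then j'.val + r
                else j'.val + r - n := mod_exp hn j'.val r j'.isLt hrn
            have e2 : (i₀.val + r) % n = if i₀.val + r < n then i₀.val + r
                else i₀.val + r - n := mod_exp hn i₀.val r i₀.isLt hrn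
            have hk2 : (i₀.val + r) % n = p := by rw [← hmodr i₀]; exact hkey
            rw [e2] at hk2
            rw [hq2, e1] at h
            have hi0 := i₀.isLt
            have hjv := j'.isLt
            split at h <;> split at hk2 <;> omega
          have hqn : q < n := Nat.mod_lt _ hn
          simp only [hD]
          split <;> split
          · rfl
          · omega
          · exfalso
            have : q = p := by omega
            exact hqp this
          · rfl
    · have : D (t + 1) = D t := by
        funext i
        simp only [hD]
        rw [if_pos (by omega), if_pos (by omega)]
      rw [this]
  have chain : ∀ t, Relation.ReflTransGen Rel (R (D 0)) (R (D t)) := by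
    intro t
    induction t with
    | zero => exact .refl
    | succ t ih => exact ih.trans (step t)
  have hβ0 : R (D 0) = β := by
    funext i
    show D 0 _ = β i
    rw [hj i]
    simp only [hD]
    rw [if_neg]
    show ¬ (n - 0 ≤ (i.val + j) % n)
    have := Nat.mod_lt (i.val + j) hn
    omega
  refine ⟨R (D n), ⟨j, fun i => ?_⟩, ⟨δ, hδ, j, hj⟩, ?_⟩
  · show R (D n) i = _
    show D n _ = _
    simp only [hD]
    rw [if_pos (by omega)]
  · have := chain n
    rw [hβ0] at this
    exact this

end UCG
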